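/- Assume F is a finite field with q ≥ max(N, 2) elements, s ≥ 1, and N ≥ m + n − 1. Let K*_conv = min{ k : there exists a k-recoverable convolution computation strategy }. Then max{m, n} ≤ K*_conv ≤ m + n − 1, and in particular (m + n − 1)/2 < K*_conv ≤ m + n − 1; that is, the optimum recovery threshold for distributed convolution is characterized within a factor of 2 by the value m + n − 1 achieved by the variation of the polynomial code. -/

import Mathlib

open Polynomial BigOperators

section ConvAux

variable {F : Type*} [Field F]

lemma conv_block_coeff {s m : ℕ} (c : Fin m → F[X])
    (hc : ∀ j, (c j).degree < (s : WithBot ℕ)) (j : Fin m) (t : ℕ) (ht : t < s) :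
    (∑ j' : Fin m, c j' * X ^ ((j' : ℕ) * s)).coeff ((j : ℕ) * s + t) = (c j).coeff t := by
  rw [Polynomial.finset_sum_coeff, Finset.sum_eq_single j]
  · rw [Polynomial.coeff_mul_X_pow', if_pos (Nat.le_add_right _ _), Nat.add_sub_cancel_left]
  · intro j' _ hj'
    have hne : (j' : ℕ) ≠ (j : ℕ) := fun h => hj' (Fin.ext h)
    rw [Polynomial.coeff_mul_X_pow']
    by_cases h : (j' : ℕ) * s ≤ (j : ℕ) * s + t
    · rw [if_pos h]
      have hjj : (j' : ℕ) < (j : ℕ) := by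
        by_contra hcon
        push_neg at hcon
        have h1 : (j : ℕ) + 1 ≤ (j' : ℕ) := by omega
        have h2 : ((j : ℕ) + 1) * s ≤ (j' : ℕ) * s := Nat.mul_le_mul_right s h1
        rw [add_mul, one_mul] at h2
        omega
      apply Polynomial.coeff_eq_zero_of_degree_lt
      refine lt_of_lt_of_le (hc j') ?_
      have h3 : ((j' : ℕ) + 1) * s ≤ (j : ℕ) * s := Nat.mul_le_mul_right s hjj
      rw [add_mul, one_mul] at h3
      have h4 : s ≤ (j : ℕ) * s + t - (j' : ℕ) * s := by omega
      exact_mod_cast h4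
    · rw [if_neg h]
  · intro h
    exact absurd (Finset.mem_univ j) h

lemma conv_block_inj {s m : ℕ} (c c' : Fin m → F[X])
    (hc : ∀ j, (c j).degree < (s : WithBot ℕ)) (hc' : ∀ j, (c' j).degree < (s : WithBot ℕ))
    (h : (∑ j : Fin m, c j * X ^ ((j : ℕ) * s)) = ∑ j : Fin m, c' j * X ^ ((j : ℕ) * s)) :
    c = c' := by
  funext j
  ext t
  by_cases ht : t < s
  · rw [← conv_block_coeff c hc j t ht, ← conv_block_coeff c' hc' j t ht, h]
  · have hts : (s : WithBot ℕ) ≤ (t : ℕ) := by exact_mod_cast Nat.not_lt.1 ht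
    rw [Polynomial.coeff_eq_zero_of_degree_lt (lt_of_lt_of_le (hc j) hts),
      Polynomial.coeff_eq_zero_of_degree_lt (lt_of_lt_of_le (hc' j) hts)]

lemma conv_lower_aux [Fintype F] {s N k μ : ℕ} (hs : 0 < s)
    (hq2 : 2 ≤ Fintype.card F) {S : Finset (Fin N)} (hS : S.card = k)
    (F1 : Fin N → (Fin μ → F[X]) → F[X])
    (hF1 : ∀ i a, (∀ j, (a j).degree < (s : WithBot ℕ)) → (F1 i a).degree < (s : WithBot ℕ))
    (E : ({i : Fin N // i ∈ S} → F[X]) → F[X])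
    (hE : ∀ a : Fin μ → F[X], (∀ j, (a j).degree < (s : WithBot ℕ)) →
      E (fun i => F1 i.1 a) = ∑ j : Fin μ, a j * X ^ ((j : ℕ) * s)) :
    μ ≤ k := by
  classical
  let e := Polynomial.degreeLTEquiv F s
  let dec : (Fin s → F) → F[X] := fun v => ((e.symm v : Polynomial.degreeLT F s) : F[X])
  have hdec : ∀ v, (dec v).degree < (s : WithBot ℕ) := fun v =>
    Polynomial.mem_degreeLT.1 (e.symm v).2
  have hdecinj : Function.Injective dec := by
    intro v w hvw
    exact e.symm.injective (Subtype.ext hvw)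
  let Φ : (Fin μ → (Fin s → F)) → ({i : Fin N // i ∈ S} → (Fin s → F)) := fun a i =>
    e ⟨F1 i.1 (fun j => dec (a j)),
      Polynomial.mem_degreeLT.2 (hF1 i.1 _ (fun j => hdec (a j)))⟩
  have hΦ : Function.Injective Φ := by
    intro a a' hΦe
    have h2 : (fun i : {i : Fin N // i ∈ S} => F1 i.1 (fun j => dec (a j)))
        = fun i => F1 i.1 (fun j => dec (a' j)) := by
      funext i
      exact congrArg Subtype.val (e.injective (congrFun hΦe i))
    have hsum := (hE (fun j => dec (a j)) (fun j => hdec _)).symm.trans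
      ((congrArg E h2).trans (hE (fun j => dec (a' j)) (fun j => hdec _)))
    have hcc := conv_block_inj _ _ (fun j => hdec (a j)) (fun j => hdec (a' j)) hsum
    funext j
    exact hdecinj (congrFun hcc j)
  have hcard := Fintype.card_le_of_injective Φ hΦ
  simp only [Fintype.card_fun, Fintype.card_fin, Fintype.card_coe, hS] at hcard
  exact (Nat.pow_le_pow_iff_right (Nat.one_lt_pow hs.ne' hq2)).1 hcard

lemma conv_eval_degree {s μ : ℕ} (c : Fin μ → F[X])
    (hc : ∀ j, (c j).degree < (s : WithBot ℕ)) (hs : 0 < s) (z : F) :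
    ((∑ j : Fin μ, (Polynomial.C (c j) : Polynomial F[X]) * X ^ (j : ℕ)).eval
      (Polynomial.C z)).degree < (s : WithBot ℕ) := by
  rw [Polynomial.eval_finset_sum]
  apply lt_of_le_of_lt (Polynomial.degree_sum_le _ _)
  rw [Finset.sup_lt_iff]
  · intro j _
    simp only [Polynomial.eval_mul, Polynomial.eval_C, Polynomial.eval_pow, Polynomial.eval_X]
    calc ((c j) * Polynomial.C z ^ (j : ℕ)).degree
        ≤ (c j).degree + (Polynomial.C z ^ (j : ℕ)).degree := Polynomial.degree_mul_le _ _
      _ ≤ (c j).degree + 0 := by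
          apply add_le_add (le_refl _)
          rw [← map_pow]
          exact Polynomial.degree_C_le
      _ = (c j).degree := add_zero _
      _ < (s : WithBot ℕ) := hc j
  · exact_mod_cast WithBot.bot_lt_coe s

lemma conv_eval_blocks {s μ : ℕ} (c : Fin μ → F[X]) :
    (∑ j : Fin μ, (Polynomial.C (c j) : Polynomial F[X]) * X ^ (j : ℕ)).eval
      ((X : F[X]) ^ s) = ∑ j : Fin μ, c j * X ^ ((j : ℕ) * s) := by
  rw [Polynomial.eval_finset_sum]
  refine Finset.sum_congr rfl fun j _ => ?_
  rw [Polynomial.eval_mul, Polynomial.eval_C, Polynomial.eval_pow, Polynomial.eval_X,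
    ← pow_mul, Nat.mul_comm]

lemma conv_natDegree_blocks {μ : ℕ} (c : Fin μ → F[X]) (hμ : 0 < μ) :
    (∑ j : Fin μ, (Polynomial.C (c j) : Polynomial F[X]) * X ^ (j : ℕ)).natDegree ≤ μ - 1 := by
  apply Polynomial.natDegree_sum_le_of_forall_le
  intro j _
  refine le_trans (Polynomial.natDegree_mul_le) ?_
  rw [Polynomial.natDegree_C, Polynomial.natDegree_X_pow]
  have := j.2
  omega

end ConvAux

theorem conv_optimum_threshold_within_factor_two {F : Type*} [Field F] [Fintype F]
    {s m n N : ℕ}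
    (hs : 0 < s) (hm : 0 < m) (hn : 0 < n) (hN : m + n - 1 ≤ N)
    (hq : max N 2 ≤ Fintype.card F) :
    let K : Set ℕ := {k : ℕ |
      ∃ (f : Fin N → (Fin m → F[X]) → F[X]) (g : Fin N → (Fin n → F[X]) → F[X]),
        (∀ (i : Fin N) (a : Fin m → F[X]),
          (∀ j, (a j).degree < (s : WithBot ℕ)) → (f i a).degree < (s : WithBot ℕ)) ∧
        (∀ (i : Fin N) (b : Fin n → F[X]),
          (∀ k', (b k').degree < (s : WithBot ℕ)) → (g i b).degree < (s : WithBot ℕ)) ∧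
        (∀ S : Finset (Fin N), S.card = k →
          ∃ D : ({i : Fin N // i ∈ S} → F[X]) → F[X],
            ∀ (a : Fin m → F[X]) (b : Fin n → F[X]),
              (∀ j, (a j).degree < (s : WithBot ℕ)) →
              (∀ k', (b k').degree < (s : WithBot ℕ)) →
              D (fun i => f i.1 a * g i.1 b)
                = (∑ j : Fin m, a j * X ^ ((j : ℕ) * s)) *
                  (∑ k' : Fin n, b k' * X ^ ((k' : ℕ) * s)))}
    max m n ≤ sInf K ∧ sInf K ≤ m + n - 1 ∧ (m + n - 1) / 2 < sInf K := by
  classical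
  intro K
  have hq2 : 2 ≤ Fintype.card F := le_trans (le_max_right N 2) hq
  -- upper bound: m + n - 1 ∈ K via the polynomial code
  obtain ⟨x⟩ : Nonempty (Fin N ↪ F) :=
    Function.Embedding.nonempty_of_card_le (by simpa using le_trans (le_max_left N 2) hq)
  have hCx : Function.Injective (fun i : Fin N => (Polynomial.C (x i) : F[X])) :=
    fun i i' h => x.injective (Polynomial.C_injective h)
  have hmem : (m + n - 1) ∈ K := by
    refine ⟨fun i a => (∑ j : Fin m, (Polynomial.C (a j) : Polynomial F[X]) * X ^ (j : ℕ)).eval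
        (Polynomial.C (x i)),
      fun i b => (∑ k' : Fin n, (Polynomial.C (b k') : Polynomial F[X]) * X ^ (k' : ℕ)).eval
        (Polynomial.C (x i)), ?_, ?_, ?_⟩
    · intro i a ha
      exact conv_eval_degree a ha hs (x i)
    · intro i b hb
      exact conv_eval_degree b hb hs (x i)
    · intro S hScard
      refine ⟨fun w => if h : ∃ P : Polynomial F[X], P.natDegree ≤ m + n - 2 ∧
          ∀ i : {i : Fin N // i ∈ S}, P.eval (Polynomial.C (x i.1)) = w i
          then h.choose.eval ((X : F[X]) ^ s) else 0, ?_⟩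
      intro a b ha hb
      have hex : ∃ P : Polynomial F[X], P.natDegree ≤ m + n - 2 ∧
          ∀ i : {i : Fin N // i ∈ S}, P.eval (Polynomial.C (x i.1)) =
            (∑ j : Fin m, (Polynomial.C (a j) : Polynomial F[X]) * X ^ (j : ℕ)).eval
                (Polynomial.C (x i.1)) *
              (∑ k' : Fin n, (Polynomial.C (b k') : Polynomial F[X]) * X ^ (k' : ℕ)).eval
                (Polynomial.C (x i.1)) := by
        refine ⟨(∑ j : Fin m, Polynomial.C (a j) * X ^ (j : ℕ)) *
          (∑ k' : Fin n, Polynomial.C (b k') * X ^ (k' : ℕ)), ?_,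
          fun i => by rw [Polynomial.eval_mul]⟩
        refine le_trans Polynomial.natDegree_mul_le ?_
        have h1 := conv_natDegree_blocks a hm
        have h2 := conv_natDegree_blocks b hn
        omega
      beta_reduce
      rw [dif_pos hex]
      have hspec := hex.choose_spec
      have heq : hex.choose = (∑ j : Fin m, Polynomial.C (a j) * X ^ (j : ℕ)) *
          (∑ k' : Fin n, Polynomial.C (b k') * X ^ (k' : ℕ)) := by
        have hz : hex.choose - (∑ j : Fin m, Polynomial.C (a j) * X ^ (j : ℕ)) *
            (∑ k' : Fin n, Polynomial.C (b k') * X ^ (k' : ℕ)) = 0 := by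
          apply Polynomial.eq_zero_of_natDegree_lt_card_of_eval_eq_zero' _
            (S.image (fun i : Fin N => (Polynomial.C (x i) : F[X])))
          · intro z hzmem
            obtain ⟨i, hiS, rfl⟩ := Finset.mem_image.1 hzmem
            rw [Polynomial.eval_sub, Polynomial.eval_mul, hspec.2 ⟨i, hiS⟩, sub_self]
          · rw [Finset.card_image_of_injective _ hCx, hScard]
            refine lt_of_le_of_lt (Polynomial.natDegree_sub_le _ _) ?_
            have h1 := hspec.1
            have h2 : ((∑ j : Fin m, (Polynomial.C (a j) : Polynomial F[X]) * X ^ (j : ℕ)) *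
                (∑ k' : Fin n, (Polynomial.C (b k') : Polynomial F[X]) * X ^ (k' : ℕ))).natDegree
                ≤ m + n - 2 := by
              refine le_trans Polynomial.natDegree_mul_le ?_
              have h3 := conv_natDegree_blocks a hm
              have h4 := conv_natDegree_blocks b hn
              omega
            have hmax := max_le h1 h2
            omega
        exact sub_eq_zero.1 hz
      rw [heq, Polynomial.eval_mul, conv_eval_blocks a, conv_eval_blocks b]
  -- lower bound : every element of K is at least max m n
  have hlow : ∀ k ∈ K, max m n ≤ k := by
    intro k hk
    obtain ⟨f, g, hf, hg, hrec⟩ := hk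
    by_cases hkN : k ≤ N
    · obtain ⟨S, -, hScard⟩ := Finset.exists_subset_card_eq
        (show k ≤ (Finset.univ : Finset (Fin N)).card by simpa using hkN)
      obtain ⟨D, hD⟩ := hrec S hScard
      -- m ≤ k
      set b0 : Fin n → F[X] := fun k' => if k' = (⟨0, hn⟩ : Fin n) then 1 else 0 with hb0
      have hb0deg : ∀ k', (b0 k').degree < (s : WithBot ℕ) := by
        intro k'
        rw [hb0]
        dsimp only
        split
        · rw [Polynomial.degree_one]
          exact_mod_cast hs
        · rw [Polynomial.degree_zero]
          exact_mod_cast WithBot.bot_lt_coe s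
      have hb0sum : (∑ k' : Fin n, b0 k' * X ^ ((k' : ℕ) * s)) = 1 := by
        rw [Finset.sum_eq_single (⟨0, hn⟩ : Fin n)]
        · simp [hb0]
        · intro k' _ hk'
          simp [hb0, hk']
        · intro h
          exact absurd (Finset.mem_univ _) h
      have hmk : m ≤ k := by
        refine conv_lower_aux hs hq2 hScard f hf
          (fun w => D (fun i => w i * g i.1 b0)) ?_
        intro a ha
        have := hD a b0 ha hb0deg
        rw [hb0sum, mul_one] at this
        exact this
      -- n ≤ k
      set a0 : Fin m → F[X] := fun j => if j = (⟨0, hm⟩ : Fin m) then 1 else 0 with ha0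
      have ha0deg : ∀ j, (a0 j).degree < (s : WithBot ℕ) := by
        intro j
        rw [ha0]
        dsimp only
        split
        · rw [Polynomial.degree_one]
          exact_mod_cast hs
        · rw [Polynomial.degree_zero]
          exact_mod_cast WithBot.bot_lt_coe s
      have ha0sum : (∑ j : Fin m, a0 j * X ^ ((j : ℕ) * s)) = 1 := by
        rw [Finset.sum_eq_single (⟨0, hm⟩ : Fin m)]
        · simp [ha0]
        · intro j _ hj
          simp [ha0, hj]
        · intro h
          exact absurd (Finset.mem_univ _) h
      have hnk : n ≤ k := by
        refine conv_lower_aux hs hq2 hScard g hg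
          (fun w => D (fun i => f i.1 a0 * w i)) ?_
        intro b hb
        have := hD a0 b ha0deg hb
        rw [ha0sum, one_mul] at this
        exact this
      exact max_le hmk hnk
    · rcases le_total m n with h | h
      · rw [max_eq_right h]; omega
      · rw [max_eq_left h]; omega
  have h1 : max m n ≤ sInf K := le_csInf ⟨_, hmem⟩ hlow
  refine ⟨h1, Nat.sInf_le hmem, lt_of_lt_of_le ?_ h1⟩
  rcases le_total m n with h | h
  · rw [max_eq_right h]; omega
  · rw [max_eq_left h]; omega
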